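/- For finite random variables ω and y with joint distribution p(ω,y), and any positive function g(ω,j), the negative cross-entropy-style quantity E_{(ω,y)~p(ω,y)}[log( g(ω,y) / Σ_{j=1}^N g(ω,j) )] is at most the mutual information I(y;ω). -/

import Mathlib

open Finset

/-- Mutual information of a joint pmf on a product of finite sets (natural log). -/
noncomputable def mutualInfo {A B : Type*} [Fintype A] [Fintype B] (p : A → B → ℝ) : ℝ :=
  ∑ a, ∑ b, p a b * Real.log (p a b / ((∑ b', p a b') * (∑ a', p a' b)))

/-- Theorem 1 of the paper: the negative cross-entropy-style quantity lower-bounds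
mutual information. -/
theorem crossEntropy_le_mutualInfo {Ω : Type*} [Fintype Ω] {N : ℕ} (hN : 0 < N)
    (p : Ω → Fin N → ℝ) (hp : ∀ ω y, 0 ≤ p ω y) (hsum : ∑ ω, ∑ y, p ω y = 1)
    (hmargΩ : ∀ ω, 0 < ∑ y, p ω y) (hmargY : ∀ y, 0 < ∑ ω, p ω y)
    (g : Ω → Fin N → ℝ) (hg : ∀ ω y, 0 < g ω y) :
    ∑ ω, ∑ y, p ω y * Real.log (g ω y / ∑ j, g ω j) ≤ mutualInfo p := by
  classical
  set G : Ω → ℝ := fun ω => ∑ j, g ω j with hGdef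
  have hGpos : ∀ ω, 0 < G ω := fun ω =>
    Finset.sum_pos (fun j _ => hg ω j) ⟨⟨0, hN⟩, mem_univ _⟩
  set S1 : Ω → ℝ := fun ω => ∑ y, p ω y with hS1def
  set S2 : Fin N → ℝ := fun y => ∑ ω, p ω y with hS2def
  set q : Ω → Fin N → ℝ := fun ω y => S1 ω * S2 y * (g ω y / G ω) with hqdef
  have hqpos : ∀ ω y, 0 < q ω y := fun ω y => by
    have := hmargΩ ω; have := hmargY y; have := hg ω y; have := hGpos ω
    positivity
  have hS2le : ∀ y, S2 y ≤ 1 := by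
    intro y
    calc S2 y ≤ ∑ ω, ∑ y', p ω y' :=
          Finset.sum_le_sum (fun ω _ =>
            Finset.single_le_sum (fun y' _ => hp ω y') (mem_univ y))
      _ = 1 := hsum
  have hqsum : ∑ ω, ∑ y, q ω y ≤ 1 := by
    have h1 : ∀ ω, ∑ y, q ω y ≤ S1 ω := by
      intro ω
      have h2 : ∑ y, q ω y ≤ ∑ y, S1 ω * (g ω y / G ω) := by
        refine Finset.sum_le_sum fun y _ => ?_
        have hgy : 0 ≤ g ω y / G ω := le_of_lt (div_pos (hg ω y) (hGpos ω))
        have : S1 ω * S2 y * (g ω y / G ω) ≤ S1 ω * 1 * (g ω y / G ω) :=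
          mul_le_mul_of_nonneg_right
            (mul_le_mul_of_nonneg_left (hS2le y) (le_of_lt (hmargΩ ω))) hgy
        simpa using this
      have h3 : ∑ y, S1 ω * (g ω y / G ω) = S1 ω := by
        rw [← Finset.mul_sum, ← Finset.sum_div,
          show (∑ i : Fin N, g ω i) = G ω from rfl, div_self (hGpos ω).ne', mul_one]
      linarith
    calc ∑ ω, ∑ y, q ω y ≤ ∑ ω, S1 ω := Finset.sum_le_sum fun ω _ => h1 ω
      _ = 1 := hsum
  have key : ∀ ω y,
      p ω y * Real.log (g ω y / G ω) - p ω y * Real.log (p ω y / (S1 ω * S2 y))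
        ≤ q ω y - p ω y := by
    intro ω y
    rcases eq_or_lt_of_le (hp ω y) with h | h
    · simp [← h]
      exact le_of_lt (hqpos ω y)
    · have hq := hqpos ω y
      have hs12 : 0 < S1 ω * S2 y := mul_pos (hmargΩ ω) (hmargY y)
      have hratio : q ω y / p ω y = (g ω y / G ω) / (p ω y / (S1 ω * S2 y)) := by
        rw [hqdef]
        field_simp
      have hlog : Real.log (g ω y / G ω) - Real.log (p ω y / (S1 ω * S2 y))
          = Real.log (q ω y / p ω y) := by
        rw [hratio, Real.log_div (ne_of_gt (div_pos (hg ω y) (hGpos ω)))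
          (ne_of_gt (div_pos h hs12))]
      rw [← mul_sub, hlog]
      have hle : Real.log (q ω y / p ω y) ≤ q ω y / p ω y - 1 :=
        Real.log_le_sub_one_of_pos (div_pos hq h)
      have := mul_le_mul_of_nonneg_left hle (le_of_lt h)
      calc p ω y * Real.log (q ω y / p ω y) ≤ p ω y * (q ω y / p ω y - 1) := this
        _ = q ω y - p ω y := by field_simp
  have hsum2 : ∑ ω, ∑ y, (p ω y * Real.log (g ω y / G ω)
      - p ω y * Real.log (p ω y / (S1 ω * S2 y)))
      ≤ ∑ ω, ∑ y, (q ω y - p ω y) := by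
    refine Finset.sum_le_sum fun ω _ => Finset.sum_le_sum fun y _ => key ω y
  have hA : ∑ ω, ∑ y, (p ω y * Real.log (g ω y / G ω)
      - p ω y * Real.log (p ω y / (S1 ω * S2 y)))
      = (∑ ω, ∑ y, p ω y * Real.log (g ω y / G ω)) - mutualInfo p := by
    simp only [Finset.sum_sub_distrib, mutualInfo]
    rfl
  have hB : ∑ ω, ∑ y, (q ω y - p ω y) = (∑ ω, ∑ y, q ω y) - 1 := by
    simp only [Finset.sum_sub_distrib, hsum]
    exact congrArg (fun t => ∑ ω, ∑ y, q ω y - t) hsum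
  rw [hA, hB] at hsum2
  linarith
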